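/- If (E₀, E₁) is an exceptional pair in a k-linear triangulated category, then the right mutation followed by the left mutation recovers the original object: L_{E₁}(R_{E₁}E₀) ≅ E₀. -/

import Mathlib

set_option linter.unusedSectionVars false

open CategoryTheory Limits Pretriangulated

section Aux

variable {D : Type*} [Category D] [Preadditive D] [HasZeroObject D]
  [HasShift D ℤ] [∀ n : ℤ, (shiftFunctor D n).Additive] [Pretriangulated D]

/-- Vanishing of graded homs absorbs a shift of the target. -/
lemma aux_shift_tgt_vanish {X Y : D} (h : ∀ n : ℤ, ∀ f : X ⟶ Y⟦n⟧, f = 0)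
    (m n : ℤ) (f : X ⟶ (Y⟦m⟧)⟦n⟧) : f = 0 := by
  have h0 : f ≫ (shiftFunctorAdd D m n).inv.app Y = 0 := h (m + n) _
  have : f = (f ≫ (shiftFunctorAdd D m n).inv.app Y) ≫ (shiftFunctorAdd D m n).hom.app Y := by
    simp
  rw [this, h0, Limits.zero_comp]

/-- Vanishing of graded homs absorbs a shift of the source. -/
lemma aux_shift_src_vanish {X Y : D} (h : ∀ n : ℤ, ∀ f : Y ⟶ X⟦n⟧, f = 0)
    (m n : ℤ) (f : Y⟦m⟧ ⟶ X⟦n⟧) : f = 0 := by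
  have h0 : (shiftFunctorCompIsoId D m (-m) (by omega)).inv.app Y ≫ (shiftFunctor D (-m)).map f
      = 0 :=
    aux_shift_tgt_vanish h n (-m) _
  have h1 : (shiftFunctor D (-m)).map f = 0 := by
    have := congrArg (fun g => (shiftFunctorCompIsoId D m (-m) (by omega)).hom.app Y ≫ g) h0
    simpa using this
  exact (shiftFunctor D (-m)).map_injective (by rw [h1, Functor.map_zero])

/-- Vanishing at degree zero from graded vanishing. -/
lemma aux_vanish_unshift {X Y : D} (h : ∀ n : ℤ, ∀ f : X ⟶ Y⟦n⟧, f = 0)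
    (f : X ⟶ Y) : f = 0 := by
  have h0 : f ≫ (shiftFunctorZero D ℤ).inv.app Y = 0 := h 0 _
  have : f = (f ≫ (shiftFunctorZero D ℤ).inv.app Y) ≫ (shiftFunctorZero D ℤ).hom.app Y := by
    simp
  rw [this, h0, Limits.zero_comp]

/-- Graded-hom vanishing out of the outer objects of a distinguished triangle
implies it for the middle object. -/
lemma aux_tri_vanish₂ {X : D} (T : Triangle D) (hT : T ∈ distTriang D)
    (h1 : ∀ n : ℤ, ∀ f : T.obj₁ ⟶ X⟦n⟧, f = 0)
    (h3 : ∀ n : ℤ, ∀ f : T.obj₃ ⟶ X⟦n⟧, f = 0)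
    (n : ℤ) (f : T.obj₂ ⟶ X⟦n⟧) : f = 0 := by
  obtain ⟨g, hg⟩ := Triangle.yoneda_exact₂ T hT f (h1 n _)
  rw [hg, h3 n g, Limits.comp_zero]

end Aux

/-- An object `E` of a `k`-linear triangulated category is exceptional if
`Hom^•(E, E) = k`. -/
def IsExceptionalObj (k : Type*) [Field k] {D : Type*} [Category D] [Preadditive D]
    [HasShift D ℤ] [CategoryTheory.Linear k D] (E : D) : Prop :=
  (∀ n : ℤ, n ≠ 0 → ∀ f : E ⟶ E⟦n⟧, f = 0) ∧
    (∀ f : E ⟶ E, ∃ c : k, f = c • 𝟙 E)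

theorem left_mutation_right_mutation_iso
    (k : Type*) [Field k] (D : Type*) [Category D] [Preadditive D] [HasZeroObject D]
    [HasShift D ℤ] [∀ n : ℤ, (shiftFunctor D n).Additive] [Pretriangulated D]
    [CategoryTheory.Linear k D]
    (E₀ E₁ : D)
    (hE₀ : IsExceptionalObj k E₀) (hE₁ : IsExceptionalObj k E₁)
    (hpair : ∀ n : ℤ, ∀ f : E₁ ⟶ E₀⟦n⟧, f = 0)
    -- the right mutation triangle `R → E₀ → W → R⟦1⟧`
    (R W : D) (ρ : R ⟶ E₀) (coev : E₀ ⟶ W) (δ : W ⟶ R⟦(1 : ℤ)⟧)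
    (htriR : Triangle.mk ρ coev δ ∈ distTriang D)
    (hWgen : ∀ X : D, (∀ n : ℤ, ∀ f : E₁ ⟶ X⟦n⟧, f = 0) →
      ∀ n : ℤ, ∀ f : W ⟶ X⟦n⟧, f = 0)
    (hWgen' : ∀ X : D, (∀ n : ℤ, ∀ f : X ⟶ E₁⟦n⟧, f = 0) →
      ∀ n : ℤ, ∀ f : X ⟶ W⟦n⟧, f = 0)
    (hWuniv : ∀ (n : ℤ) (g : E₀ ⟶ E₁⟦n⟧), ∃! f : W ⟶ E₁⟦n⟧, coev ≫ f = g)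
    (hRorth : ∀ n : ℤ, ∀ f : R ⟶ E₁⟦n⟧, f = 0)
    -- the left mutation triangle `T' → R → L → T'⟦1⟧`
    (T' L : D) (ev' : T' ⟶ R) (ι' : R ⟶ L) (δ' : L ⟶ T'⟦(1 : ℤ)⟧)
    (htriL : Triangle.mk ev' ι' δ' ∈ distTriang D)
    (hTgen : ∀ X : D, (∀ n : ℤ, ∀ f : E₁ ⟶ X⟦n⟧, f = 0) →
      ∀ n : ℤ, ∀ f : T' ⟶ X⟦n⟧, f = 0)
    (hTgen' : ∀ X : D, (∀ n : ℤ, ∀ f : X ⟶ E₁⟦n⟧, f = 0) →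
      ∀ n : ℤ, ∀ f : X ⟶ T'⟦n⟧, f = 0)
    (hTuniv : ∀ (n : ℤ) (g : E₁ ⟶ R⟦n⟧),
      ∃! f : E₁ ⟶ T'⟦n⟧, f ≫ (shiftFunctor D n).map ev' = g) :
    Nonempty (L ≅ E₀) := by
  -- the inverse rotation of the right mutation triangle: `W⟦-1⟧ → R → E₀ → W`
  set T1 : Triangle D := (Triangle.mk ρ coev δ).invRotate with hT1def
  have htri1 : T1 ∈ distTriang D := inv_rot_of_distTriang _ htriR
  -- `ev' ≫ ρ = 0`
  have hρ0 : ev' ≫ ρ = 0 := aux_vanish_unshift (hTgen E₀ hpair) _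
  -- factor `ev'` through `T1.mor₁ : W⟦-1⟧ ⟶ R`
  obtain ⟨φ, hφ⟩ := Triangle.coyoneda_exact₂ T1 htri1 ev' (show ev' ≫ T1.mor₂ = 0 from hρ0)
  -- composition with shifts of `ev'` is bijective on maps from `E₁`
  have hbij_ev : ∀ n : ℤ, Function.Bijective
      (fun h : E₁ ⟶ T'⟦n⟧ => h ≫ (shiftFunctor D n).map ev') := by
    intro n
    constructor
    · intro h₁ h₂ hh
      exact ((hTuniv n (h₂ ≫ (shiftFunctor D n).map ev')).unique hh rfl)
    · intro g
      obtain ⟨f, hf, -⟩ := hTuniv n g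
      exact ⟨f, hf⟩
  -- composition with shifts of `T1.mor₁` is bijective on maps from `E₁`
  have hbij_u : ∀ n : ℤ, Function.Bijective
      (fun h : E₁ ⟶ (T1.obj₁)⟦n⟧ => h ≫ (shiftFunctor D n).map T1.mor₁) := by
    intro n
    have htri1n := Triangle.shift_distinguished T1 htri1 n
    set T1n := (CategoryTheory.shiftFunctor (Triangle D) n).obj T1 with hT1ndef
    constructor
    · intro h₁ h₂ hh
      have hh' : h₁ ≫ (shiftFunctor D n).map T1.mor₁
          = h₂ ≫ (shiftFunctor D n).map T1.mor₁ := hh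
      have h0 : (h₁ - h₂) ≫ (shiftFunctor D n).map T1.mor₁ = 0 := by
        rw [Preadditive.sub_comp, hh', sub_self]
      -- use the inverse rotation of the shifted triangle
      have h0' : (h₁ - h₂) ≫ T1n.mor₁ = 0 := by
        show (h₁ - h₂) ≫ (n.negOnePow • T1.mor₁⟦n⟧') = 0
        rw [Linear.comp_units_smul, h0, smul_zero]
      obtain ⟨g, hg⟩ := Triangle.coyoneda_exact₂ T1n.invRotate
        (inv_rot_of_distTriang _ htri1n) (h₁ - h₂)
        (show (h₁ - h₂) ≫ T1n.mor₁ = 0 from h0')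
      have hg0 : g = 0 := aux_shift_tgt_vanish hpair n (-1) g
      rw [hg0, Limits.zero_comp] at hg
      exact sub_eq_zero.mp hg
    · intro g
      have h2 : g ≫ T1n.mor₂ = 0 := hpair n _
      obtain ⟨h, hh⟩ := Triangle.coyoneda_exact₂ T1n htri1n g h2
      change E₁ ⟶ (T1.obj₁)⟦n⟧ at h
      refine ⟨n.negOnePow • h, ?_⟩
      show (n.negOnePow • h) ≫ (shiftFunctor D n).map T1.mor₁ = g
      rw [Linear.units_smul_comp, hh]
      show n.negOnePow • (h ≫ (shiftFunctor D n).map T1.mor₁)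
        = h ≫ (n.negOnePow • (shiftFunctor D n).map T1.mor₁)
      rw [Linear.comp_units_smul]
  -- composition with shifts of `φ` is bijective on maps from `E₁`
  have hbij_φ : ∀ n : ℤ, Function.Bijective
      (fun h : E₁ ⟶ T'⟦n⟧ => h ≫ (shiftFunctor D n).map φ) := by
    intro n
    have hcomp : ∀ h : E₁ ⟶ T'⟦n⟧,
        (h ≫ (shiftFunctor D n).map φ) ≫ (shiftFunctor D n).map T1.mor₁
          = h ≫ (shiftFunctor D n).map ev' := by
      intro h
      rw [Category.assoc, ← Functor.map_comp, ← hφ]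
      rfl
    constructor
    · intro h₁ h₂ hh
      have hh' : h₁ ≫ (shiftFunctor D n).map φ = h₂ ≫ (shiftFunctor D n).map φ := hh
      apply (hbij_ev n).injective
      show h₁ ≫ _ = h₂ ≫ _
      rw [← hcomp h₁, ← hcomp h₂, hh']
    · intro g
      obtain ⟨h, hh⟩ := (hbij_ev n).surjective (g ≫ (shiftFunctor D n).map T1.mor₁)
      refine ⟨h, (hbij_u n).injective ?_⟩
      show (h ≫ (shiftFunctor D n).map φ) ≫ _ = g ≫ _
      rw [hcomp h]
      exact hh
  -- the cone of `φ`
  obtain ⟨C, a, b, hTc⟩ := distinguished_cocone_triangle φ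
  set Tc : Triangle D := Triangle.mk φ a b with hTcdef
  -- `Hom(E₁, C⟦n⟧) = 0`
  have hC : ∀ n : ℤ, ∀ f : E₁ ⟶ C⟦n⟧, f = 0 := by
    intro n f
    have htcn := Triangle.shift_distinguished Tc hTc n
    set Tcn := (CategoryTheory.shiftFunctor (Triangle D) n).obj Tc with hTcndef
    change E₁ ⟶ Tcn.obj₃ at f
    have h31 : Tcn.mor₃ ≫ Tcn.mor₁⟦(1:ℤ)⟧' = 0 := comp_distTriang_mor_zero₃₁ _ htcn
    -- first show `f ≫ Tcn.mor₃ = 0`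
    have hmor3 : f ≫ Tcn.mor₃ = 0 := by
      have hga : (f ≫ Tcn.mor₃) ≫ (φ⟦n⟧')⟦(1:ℤ)⟧' = 0 := by
        have h1 : Tcn.mor₁⟦(1:ℤ)⟧' = n.negOnePow • (φ⟦n⟧')⟦(1:ℤ)⟧' := by
          show ((n.negOnePow • φ⟦n⟧' : _ ⟶ _)⟦(1:ℤ)⟧') = _
          rw [Functor.map_units_smul]
        have h2 : (f ≫ Tcn.mor₃) ≫ Tcn.mor₁⟦(1:ℤ)⟧' = 0 := by
          rw [Category.assoc, h31, Limits.comp_zero]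
        erw [h1, Linear.comp_units_smul] at h2
        have h3 := congrArg (fun z => n.negOnePow⁻¹ • z) h2
        simp only [smul_smul, inv_mul_cancel, one_smul, smul_zero] at h3
        exact h3
      -- transfer along `shiftFunctorAdd' D n 1 (n+1)`
      set α := shiftFunctorAdd' D n 1 (n+1) rfl with hαdef
      have hnat : α.inv.app T' ≫ φ⟦(n+1:ℤ)⟧' = (φ⟦n⟧')⟦(1:ℤ)⟧' ≫ α.inv.app (T1.obj₁) :=
        (α.inv.naturality φ).symm
      have hg' : ((f ≫ Tcn.mor₃) ≫ α.inv.app T') ≫ φ⟦(n+1:ℤ)⟧' = 0 := by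
        erw [Category.assoc, hnat, ← Category.assoc, hga, Limits.zero_comp]
      have hg0 : (f ≫ Tcn.mor₃) ≫ α.inv.app T' = 0 :=
        (hbij_φ (n+1)).injective (a₁ := (f ≫ Tcn.mor₃) ≫ α.inv.app T') (a₂ := 0)
          (by simpa using hg')
      erw [← cancel_mono (α.inv.app T'), Limits.zero_comp]
      exact hg0
    obtain ⟨g₂, hg₂⟩ := Triangle.coyoneda_exact₃ Tcn htcn f hmor3
    obtain ⟨h, hh⟩ := (hbij_φ n).surjective (n.negOnePow⁻¹ • g₂)
    have hmor1 : h ≫ Tcn.mor₁ = g₂ := by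
      show h ≫ (n.negOnePow • φ⟦n⟧') = g₂
      rw [Linear.comp_units_smul]
      erw [show h ≫ φ⟦n⟧' = n.negOnePow⁻¹ • g₂ from hh, smul_inv_smul]
    erw [hg₂, ← hmor1, Category.assoc, comp_distTriang_mor_zero₁₂ _ htcn, Limits.comp_zero]
    rfl
  -- `C` receives no maps from objects generated by `E₁`, hence `𝟙 C = 0`
  have hPC : ∀ n : ℤ, ∀ f : C ⟶ C⟦n⟧, f = 0 := by
    have h1 : ∀ n : ℤ, ∀ f : (Tc.rotate).obj₁ ⟶ C⟦n⟧, f = 0 := by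
      intro n f
      exact aux_shift_src_vanish (hWgen C hC) (-1) n f
    have h3 : ∀ n : ℤ, ∀ f : (Tc.rotate).obj₃ ⟶ C⟦n⟧, f = 0 := by
      intro n f
      exact aux_shift_src_vanish (hTgen C hC) 1 n f
    exact aux_tri_vanish₂ Tc.rotate (rot_of_distTriang _ hTc) h1 h3
  have hCzero : IsZero C := by
    rw [IsZero.iff_id_eq_zero]
    exact aux_vanish_unshift hPC (𝟙 C)
  -- hence `φ` is an isomorphism
  have hφiso : IsIso φ := (Triangle.isZero₃_iff_isIso₁ Tc hTc).mp hCzero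
  -- complete to a morphism of triangles and conclude
  obtain ⟨ψ, hψ₁, hψ₂⟩ := complete_distinguished_triangle_morphism
    (Triangle.mk ev' ι' δ') T1 htriL htri1 φ (𝟙 R)
    (by show ev' ≫ 𝟙 R = φ ≫ T1.mor₁; rw [Category.comp_id]; exact hφ)
  let μ : Triangle.mk ev' ι' δ' ⟶ T1 :=
    { hom₁ := φ, hom₂ := 𝟙 R, hom₃ := ψ,
      comm₁ := by show ev' ≫ 𝟙 R = φ ≫ T1.mor₁; rw [Category.comp_id]; exact hφ,
      comm₂ := hψ₁, comm₃ := hψ₂ }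
  have : IsIso μ.hom₃ := isIso₃_of_isIso₁₂ μ htriL htri1 hφiso (by change IsIso (𝟙 R); infer_instance)
  exact ⟨@asIso _ _ _ _ ψ this⟩
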